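/- Let s ∈ {0,1}^{n'} with 1 ≤ n' ≤ n and j ∈ [n'], and suppose s[j] = 0. Let s' = 1^j 2^{n-j} where 2 is a character distinct from 0 and 1, and let k be the number of 1's among the first j characters of s. Then d_L(s, s') ≥ n - k. -/

import Mathlib

/-- Costs for the Levenshtein distance (as formerly in Mathlib, `Mathlib.Data.List.EditDistance`). -/
structure Levenshtein.Cost (α β δ : Type*) where
  delete : α → δ
  insert : β → δ
  substitute : α → β → δ

/-- The default (unit) cost function. -/
def Levenshtein.defaultCost {α : Type*} [DecidableEq α] : Levenshtein.Cost α α ℕ where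
  delete _ := 1
  insert _ := 1
  substitute a b := if a = b then 0 else 1

/-- Helper for `suffixLevenshtein` (old Mathlib definition). -/
def Levenshtein.impl {α β δ : Type*} [AddZeroClass δ] [Min δ] (C : Levenshtein.Cost α β δ)
    (xs : List α) (y : β) (d : {r : List δ // 0 < r.length}) : {r : List δ // 0 < r.length} :=
  let ⟨ds, w⟩ := d
  xs.zip (ds.zip ds.tail) |>.foldr
    (init := ⟨[C.insert y + ds.getLast (List.length_pos_iff.mp w)], by simp⟩)
    (fun ⟨x, d₀, d₁⟩ ⟨r, w⟩ =>
      ⟨min (C.delete x + r[0]) (min (C.insert y + d₀) (C.substitute x y + d₁)) :: r, by simp⟩)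

/-- Levenshtein distances from all suffixes of `xs` to `ys` (old Mathlib definition). -/
def suffixLevenshtein {α β δ : Type*} [AddZeroClass δ] [Min δ] (C : Levenshtein.Cost α β δ)
    (xs : List α) (ys : List β) : {r : List δ // 0 < r.length} :=
  ys.foldr
    (Levenshtein.impl C xs)
    (xs.foldr (init := ⟨[0], by simp⟩) (fun a ⟨r, w⟩ => ⟨(C.delete a + r[0]) :: r, by simp⟩))

/-- The Levenshtein distance (old Mathlib definition). -/
def levenshtein {α β δ : Type*} [AddZeroClass δ] [Min δ] (C : Levenshtein.Cost α β δ)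
    (xs : List α) (ys : List β) : δ :=
  let ⟨r, w⟩ := suffixLevenshtein C xs ys
  r[0]

/-- The Levenshtein edit distance with unit costs, over alphabet `ℕ`
(which contains the extended alphabet `{0,1,2}`). -/
def editDist (x y : List ℕ) : ℕ := levenshtein Levenshtein.defaultCost x y


namespace Levenshtein

@[simp] theorem defaultCost_delete {α : Type*} [DecidableEq α] (a : α) :
    (defaultCost : Cost α α ℕ).delete a = 1 := rfl

@[simp] theorem defaultCost_insert {α : Type*} [DecidableEq α] (a : α) :
    (defaultCost : Cost α α ℕ).insert a = 1 := rfl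

@[simp] theorem defaultCost_substitute {α : Type*} [DecidableEq α] (a b : α) :
    (defaultCost : Cost α α ℕ).substitute a b = if a = b then 0 else 1 := rfl

theorem impl_cons {α β δ : Type*} [AddZeroClass δ] [Min δ] (C : Cost α β δ) (x : α)
    (xs : List α) (y : β) (d : δ) (ds : List δ) (w' : 0 < ds.length) (w) :
    (impl C (x :: xs) y ⟨d :: ds, w⟩).1 =
      min (C.delete x + (impl C xs y ⟨ds, w'⟩).1[0]'(impl C xs y ⟨ds, w'⟩).2)
        (min (C.insert y + d) (C.substitute x y + ds[0])) :: (impl C xs y ⟨ds, w'⟩).1 :=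
  match ds, w' with | _ :: _, _ => rfl

theorem impl_nil {α β δ : Type*} [AddZeroClass δ] [Min δ] (C : Cost α β δ) (y : β)
    (d : {r : List δ // 0 < r.length}) (w : d.1.length = 1) :
    (impl C [] y d).1 = [C.insert y + d.1[0]'d.2] := by
  obtain ⟨ds, hd⟩ := d
  rcases ds with _ | ⟨a, _ | ⟨b, ds⟩⟩
  · simp at hd
  · rfl
  · simp at w

theorem impl_length {α β δ : Type*} [AddZeroClass δ] [Min δ] (C : Cost α β δ) (xs : List α)
    (y : β) (d : {r : List δ // 0 < r.length}) (w : d.1.length = xs.length + 1) :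
    (impl C xs y d).1.length = xs.length + 1 := by
  induction xs generalizing d with
  | nil =>
    rw [impl_nil C y d w]; rfl
  | cons x xs ih =>
    obtain ⟨ds, hd⟩ := d
    rcases ds with _ | ⟨d₁, _ | ⟨d₂, ds⟩⟩
    · simp at hd
    · simp at w
    · rw [impl_cons C x xs y d₁ (d₂ :: ds) (by simp), List.length_cons,
        ih _ (by simpa using w)]
      rfl

end Levenshtein

theorem getElem_zero_of_eq' {δ : Type*} {l : List δ} {a : δ} {t : List δ} (h : l = a :: t)
    (p : 0 < l.length) : l[0]'p = a := by
  subst h; rfl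

theorem suffixLevenshtein_cons₂ {α β δ : Type*} [AddZeroClass δ] [Min δ]
    (C : Levenshtein.Cost α β δ) (xs : List α) (y : β) (ys : List β) :
    suffixLevenshtein C xs (y :: ys) = Levenshtein.impl C xs y (suffixLevenshtein C xs ys) := rfl

theorem suffixLevenshtein_cons_nil {α β δ : Type*} [AddZeroClass δ] [Min δ]
    (C : Levenshtein.Cost α β δ) (x : α) (xs : List α) :
    (suffixLevenshtein C (x :: xs) ([] : List β)).1
      = (C.delete x + levenshtein C xs ([] : List β)) :: (suffixLevenshtein C xs ([] : List β)).1 :=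
  rfl

theorem suffixLevenshtein_length {α β δ : Type*} [AddZeroClass δ] [Min δ]
    (C : Levenshtein.Cost α β δ) (xs : List α) (ys : List β) :
    (suffixLevenshtein C xs ys).1.length = xs.length + 1 := by
  induction ys with
  | nil =>
    induction xs with
    | nil => rfl
    | cons x xs ih => rw [suffixLevenshtein_cons_nil, List.length_cons, ih, List.length_cons]
  | cons y ys ih =>
    rw [suffixLevenshtein_cons₂]
    exact Levenshtein.impl_length _ _ _ _ ih

theorem suffixLevenshtein_cons_cons_fst {α β δ : Type*} [AddZeroClass δ] [Min δ]
    (C : Levenshtein.Cost α β δ) (x : α) (xs : List α) (y : β) (ys : List β)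
    (h1 : (suffixLevenshtein C (x :: xs) ys).1
      = levenshtein C (x :: xs) ys :: (suffixLevenshtein C xs ys).1) :
    (suffixLevenshtein C (x :: xs) (y :: ys)).1
      = min (C.delete x + levenshtein C xs (y :: ys))
          (min (C.insert y + levenshtein C (x :: xs) ys) (C.substitute x y + levenshtein C xs ys))
        :: (suffixLevenshtein C xs (y :: ys)).1 := by
  have h : suffixLevenshtein C (x :: xs) ys
      = ⟨levenshtein C (x :: xs) ys :: (suffixLevenshtein C xs ys).1, by simp⟩ := Subtype.ext h1
  rw [suffixLevenshtein_cons₂, h,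
    Levenshtein.impl_cons C x xs y _ _ (suffixLevenshtein C xs ys).2]
  rfl

theorem suffixLevenshtein_cons₁ {α β δ : Type*} [AddZeroClass δ] [Min δ]
    (C : Levenshtein.Cost α β δ) (x : α) (xs : List α) (ys : List β) :
    (suffixLevenshtein C (x :: xs) ys).1
      = levenshtein C (x :: xs) ys :: (suffixLevenshtein C xs ys).1 := by
  induction ys with
  | nil => rfl
  | cons y ys ih =>
    have h := suffixLevenshtein_cons_cons_fst C x xs y ys ih
    rw [h]
    congr 1
    exact (getElem_zero_of_eq' h _).symm

theorem levenshtein_nil_nil {α β δ : Type*} [AddZeroClass δ] [Min δ]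
    (C : Levenshtein.Cost α β δ) : levenshtein C ([] : List α) ([] : List β) = 0 := rfl

@[simp] theorem levenshtein_cons_nil {α β δ : Type*} [AddZeroClass δ] [Min δ]
    (C : Levenshtein.Cost α β δ) (x : α) (xs : List α) :
    levenshtein C (x :: xs) ([] : List β) = C.delete x + levenshtein C xs ([] : List β) := rfl

@[simp] theorem levenshtein_nil_cons {α β δ : Type*} [AddZeroClass δ] [Min δ]
    (C : Levenshtein.Cost α β δ) (y : β) (ys : List β) :
    levenshtein C ([] : List α) (y :: ys) = C.insert y + levenshtein C ([] : List α) ys := by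
  have h : (suffixLevenshtein C ([] : List α) (y :: ys)).1
      = [C.insert y + levenshtein C ([] : List α) ys] := by
    rw [suffixLevenshtein_cons₂, Levenshtein.impl_nil C y _ (suffixLevenshtein_length C [] ys)]
    rfl
  exact getElem_zero_of_eq' h _

theorem levenshtein_cons_cons {α β δ : Type*} [AddZeroClass δ] [Min δ]
    (C : Levenshtein.Cost α β δ) (x : α) (xs : List α) (y : β) (ys : List β) :
    levenshtein C (x :: xs) (y :: ys)
      = min (C.delete x + levenshtein C xs (y :: ys))
          (min (C.insert y + levenshtein C (x :: xs) ys) (C.substitute x y + levenshtein C xs ys)) :=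
  getElem_zero_of_eq'
    (suffixLevenshtein_cons_cons_fst C x xs y ys (suffixLevenshtein_cons₁ C x xs ys)) _

lemma lev_nil_left (y : List ℕ) :
    levenshtein Levenshtein.defaultCost ([] : List ℕ) y = y.length := by
  induction y with
  | nil => simp [levenshtein_nil_nil]
  | cons a t ih => simp [ih]; omega

lemma lev_nil_right (x : List ℕ) :
    levenshtein Levenshtein.defaultCost x ([] : List ℕ) = x.length := by
  induction x with
  | nil => simp [levenshtein_nil_nil]
  | cons a t ih => simp [ih]; omega

/-- Key lower bound: `lev(s, 1^a 2^m) ≥ B` whenever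
`B ≤ max(p,a) − min(a, ones(s[:p])) + max(|s|−p, m)` for all `p ≤ |s|`. -/
lemma key_lower_bound : ∀ N s a m (B : ℕ), s.length + a + m ≤ N →
    (∀ c ∈ s, c = 0 ∨ c = 1) →
    (∀ p ≤ s.length, B ≤ max p a - min a ((s.take p).count 1) + max (s.length - p) m) →
    B ≤ levenshtein Levenshtein.defaultCost s (List.replicate a 1 ++ List.replicate m 2) := by
  intro N
  induction N with
  | zero =>
    intro s a m B hN hbin hB
    obtain rfl : s = [] := by
      cases s with
      | nil => rfl
      | cons c t => simp at hN
    obtain rfl : a = 0 := by omega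
    obtain rfl : m = 0 := by omega
    have := hB 0 (by simp)
    simpa [levenshtein_nil_nil] using this
  | succ N ih =>
    intro s a m B hN hbin hB
    cases s with
    | nil =>
      rw [lev_nil_left]
      have := hB 0 (by simp)
      simp at this ⊢
      omega
    | cons c s' =>
      have hbin' : ∀ x ∈ s', x = 0 ∨ x = 1 := fun x hx => hbin x (List.mem_cons_of_mem _ hx)
      have hc : c = 0 ∨ c = 1 := hbin c List.mem_cons_self
      have hcount : ∀ p : ℕ, ((c :: s').take (p+1)).count 1
          = (s'.take p).count 1 + if c = 1 then 1 else 0 := by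
        intro p
        rw [List.take_succ_cons, List.count_cons]
        simp
      simp only [List.length_cons] at hN hB
      cases a with
      | zero =>
        cases m with
        | zero =>
          simp only [List.replicate_zero, List.append_nil]
          rw [lev_nil_right]
          have := hB (s'.length + 1) (le_refl _)
          simp at this ⊢
          omega
        | succ m' =>
          have hc2 : c ≠ 2 := by omega
          simp only [List.replicate_zero, List.nil_append, List.replicate_succ,
            levenshtein_cons_cons, Levenshtein.defaultCost_delete,
            Levenshtein.defaultCost_insert, Levenshtein.defaultCost_substitute,
            if_neg hc2]
          refine le_min ?_ (le_min ?_ ?_)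
          · -- delete c
            have h1 := ih s' 0 (m'+1) (B-1) (by omega) hbin' ?_
            · simp only [List.replicate_zero, List.nil_append, List.replicate_succ] at h1
              omega
            · intro p hp
              have h := hB (p+1) (by omega)
              simp only [hcount] at h
              simp only [Nat.add_sub_add_right] at h
              omega
          · -- insert 2
            have h1 := ih (c :: s') 0 m' (B-1) (by simp; omega) hbin ?_
            · simp only [List.replicate_zero, List.nil_append] at h1
              omega
            · intro p hp
              have h := hB p (by simpa using hp)
              simp only [List.length_cons]
              omega
          · -- substitute c → 2
            have h1 := ih s' 0 m' (B-1) (by omega) hbin' ?_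
            · simp only [List.replicate_zero, List.nil_append] at h1
              omega
            · intro p hp
              have h := hB p (by omega)
              simp only [Nat.min_zero, Nat.max_zero] at h ⊢
              have : s'.length + 1 - p ≤ s'.length - p + 1 := by omega
              omega
      | succ a' =>
        simp only [List.replicate_succ, List.cons_append, levenshtein_cons_cons,
          Levenshtein.defaultCost_delete, Levenshtein.defaultCost_insert,
          Levenshtein.defaultCost_substitute]
        refine le_min ?_ (le_min ?_ ?_)
        · -- delete c
          have h1 := ih s' (a'+1) m (B-1) (by omega) hbin' ?_
          · simp only [List.replicate_succ, List.cons_append] at h1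
            omega
          · intro p hp
            have h := hB (p+1) (by omega)
            simp only [hcount, Nat.add_sub_add_right] at h
            rcases hc with h0 | h0 <;> simp [h0] at h <;> omega
        · -- insert 1
          have h1 := ih (c :: s') a' m (B-1) (by simp; omega) hbin ?_
          · omega
          · intro p hp
            have h := hB p (by simpa using hp)
            simp only [List.length_cons]
            omega
        · -- substitute c → 1
          have h1 := ih s' a' m (B - (if c = 1 then 0 else 1)) (by omega) hbin' ?_
          · rcases hc with h0 | h0 <;> simp [h0] at h1 ⊢ <;> omega
          · intro p hp
            have h := hB (p+1) (by omega)
            simp only [hcount, Nat.add_sub_add_right] at h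
            rcases hc with h0 | h0 <;> simp [h0] at h ⊢ <;> omega

/-- For a binary sequence `s` of length `n'` with `1 ≤ n' ≤ n`, `j ∈ [n']`
with `s[j] = 0` (1-indexed), `s' = 1^j 2^(n-j)`, and `k` the number of `1`'s among the
first `j` characters of `s`, we have `d_L(s, s') ≥ n - k`. -/
theorem edit_dist_to_ones_twos_query_lower_bound
    (n n' : ℕ) (hn'1 : 1 ≤ n') (hn'n : n' ≤ n)
    (s : List ℕ) (hlen : s.length = n')
    (hbin : ∀ c ∈ s, c = 0 ∨ c = 1)
    (j : ℕ) (hj1 : 1 ≤ j) (hjn' : j ≤ n') (hsj : s.getD (j - 1) 0 = 0)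
    (k : ℕ) (hk : k = (s.take j).count 1) :
    n - k ≤ editDist s (List.replicate j 1 ++ List.replicate (n - j) 2) := by
  apply key_lower_bound (s.length + j + (n - j)) s j (n - j) (n - k) (le_refl _) hbin
  intro p hp
  rw [hlen] at hp
  have hcle : ∀ q : ℕ, (s.take q).count 1 ≤ q := by
    intro q
    calc (s.take q).count 1 ≤ (s.take q).length := List.count_le_length
    _ ≤ q := by simp
  have h1 : p ≤ j → (s.take p).count 1 ≤ k := by
    intro h
    have he : s.take p = (s.take j).take p := by rw [List.take_take, min_eq_left h]
    rw [he, hk]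
    exact ((s.take j).take_sublist p).count_le 1
  have h2 : j ≤ p → (s.take p).count 1 ≤ k + (p - j) := by
    intro h
    have he : s.take p = s.take j ++ (s.take p).drop j := by
      conv_lhs => rw [← List.take_append_drop j (s.take p)]
      rw [List.take_take, min_eq_left h]
    rw [he, List.count_append, hk]
    have : ((s.take p).drop j).count 1 ≤ (s.take p).length - j := by
      calc ((s.take p).drop j).count 1 ≤ ((s.take p).drop j).length := List.count_le_length
      _ = (s.take p).length - j := List.length_drop
    have hl : (s.take p).length ≤ p := by simp
    omega
  rw [hlen]
  rcases le_total p j with h | h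
  · have := h1 h
    have := hcle p
    omega
  · have := h2 h
    omega
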